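/- Let A and B be unital C*-algebras and φ : A → B an arbitrary function. Then φ is a unital ring homomorphism if and only if the entrywise map φ ⊗ id_{M₁₆} : M₁₆(A) → M₁₆(B) restricts to a group homomorphism from GL(M₁₆(A)) to GL(M₁₆(B)) (i.e. it maps invertible matrices to invertible matrices, sends the identity to the identity, and (φ ⊗ id_{M₁₆})(uv) = (φ ⊗ id_{M₁₆})(u) · (φ ⊗ id_{M₁₆})(v) for all invertible u, v ∈ M₁₆(A)). -/

import Mathlib

open Matrix

section aux

variable {A B : Type*} [Ring A] [Ring B]

/-- A unipotent elementary matrix is a unit. -/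
lemma aux_unit {n : Type*} [Fintype n] [DecidableEq n] {i j : n} (hij : i ≠ j) (a : A) :
    IsUnit (1 + Matrix.single i j a) := by
  have hsq : Matrix.single i j a * Matrix.single i j a = 0 :=
    Matrix.single_mul_single_of_ne (c := a) i j i (Ne.symm hij) a
  have h1 : (1 + Matrix.single i j a) * (1 - Matrix.single i j a) = 1 := by
    have : (1 + Matrix.single i j a) * (1 - Matrix.single i j a)
        = 1 - Matrix.single i j a * Matrix.single i j a := by noncomm_ring
    rw [this, hsq, sub_zero]
  have h2 : (1 - Matrix.single i j a) * (1 + Matrix.single i j a) = 1 := by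
    have : (1 - Matrix.single i j a) * (1 + Matrix.single i j a)
        = 1 - Matrix.single i j a * Matrix.single i j a := by noncomm_ring
    rw [this, hsq, sub_zero]
  exact ⟨⟨_, _, h1, h2⟩, rfl⟩

end aux

/-- Let `A` and `B` be unital C*-algebras and `φ : A → B` an
arbitrary function.  Then `φ` is a unital ring homomorphism if and only if
the entrywise map `φ ⊗ id_{M₁₆}` restricts to a group homomorphism
`GL(M₁₆(A)) → GL(M₁₆(B))` (it maps invertibles to invertibles, sends the
identity to the identity, and is multiplicative on invertibles). -/
theorem stmt_9 {A B : Type*} [CStarAlgebra A] [CStarAlgebra B] (φ : A → B) :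
    (φ 1 = 1 ∧ (∀ x y, φ (x + y) = φ x + φ y) ∧
        (∀ x y, φ (x * y) = φ x * φ y)) ↔
      ((∀ u : Matrix (Fin 16) (Fin 16) A, IsUnit u → IsUnit (u.map φ)) ∧
        (1 : Matrix (Fin 16) (Fin 16) A).map φ = 1 ∧
        (∀ u v : Matrix (Fin 16) (Fin 16) A, IsUnit u → IsUnit v →
          (u * v).map φ = u.map φ * v.map φ)) := by
  constructor
  · rintro ⟨h1, hadd, hmul⟩
    have h0 : φ 0 = 0 := by
      have := hadd 0 0
      simp only [add_zero] at this
      have := congrArg (· - φ 0) this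
      simpa using this.symm
    let f : A →+* B :=
      { toFun := φ, map_one' := h1, map_mul' := hmul, map_zero' := h0, map_add' := hadd }
    refine ⟨fun u hu => ?_, ?_, fun u v _ _ => ?_⟩
    · exact (hu.map f.mapMatrix : IsUnit (f.mapMatrix u))
    · exact Matrix.map_one φ h0 h1
    · exact Matrix.map_mul (f := f)
  · rintro ⟨hinv, hone, hm⟩
    have h1 : φ 1 = 1 := by
      have := congrFun (congrFun hone 0) 0
      simpa [Matrix.map_apply, Matrix.one_apply] using this
    have h0 : φ 0 = 0 := by
      have := congrFun (congrFun hone 0) 1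
      simpa [Matrix.map_apply, Matrix.one_apply] using this
    have hstd : ∀ (i j : Fin 16), i ≠ j → ∀ a : A,
        (1 + Matrix.single i j a).map φ = 1 + Matrix.single i j (φ a) := by
      intro i j hij a
      ext i' j'
      simp only [Matrix.map_apply, Matrix.add_apply, Matrix.one_apply, Matrix.single,
        Matrix.of_apply]
      split_ifs with hd he he <;> simp_all [h0, h1]
    refine ⟨h1, fun x y => ?_, fun x y => ?_⟩
    · have h := hm (1 + Matrix.single (0 : Fin 16) (1 : Fin 16) x) (1 + Matrix.single (0 : Fin 16) (1 : Fin 16) y)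
        (aux_unit (by decide) x) (aux_unit (by decide) y)
      have hsq : Matrix.single (0 : Fin 16) (1 : Fin 16) x * Matrix.single (0 : Fin 16) (1 : Fin 16) y = 0 :=
        Matrix.single_mul_single_of_ne (c := x) (0 : Fin 16) (1 : Fin 16) (0 : Fin 16) (by decide) y
      have hsq' : Matrix.single (0 : Fin 16) (1 : Fin 16) (φ x) * Matrix.single (0 : Fin 16) (1 : Fin 16) (φ y) = 0 :=
        Matrix.single_mul_single_of_ne (c := φ x) (0 : Fin 16) (1 : Fin 16) (0 : Fin 16) (by decide) (φ y)
      have hL : (1 + Matrix.single (0 : Fin 16) (1 : Fin 16) x) * (1 + Matrix.single (0 : Fin 16) (1 : Fin 16) y)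
          = 1 + Matrix.single (0 : Fin 16) (1 : Fin 16) (x + y) := by
        have e : (1 + Matrix.single (0 : Fin 16) (1 : Fin 16) x) *
              (1 + Matrix.single (0 : Fin 16) (1 : Fin 16) y)
            = 1 + (Matrix.single (0 : Fin 16) (1 : Fin 16) x
              + Matrix.single (0 : Fin 16) (1 : Fin 16) y)
              + Matrix.single (0 : Fin 16) (1 : Fin 16) x
                * Matrix.single (0 : Fin 16) (1 : Fin 16) y := by noncomm_ring
        rw [e, hsq, add_zero, Matrix.single_add]
      have hR : (1 + Matrix.single (0 : Fin 16) (1 : Fin 16) (φ x)) * (1 + Matrix.single (0 : Fin 16) (1 : Fin 16) (φ y))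
          = 1 + Matrix.single (0 : Fin 16) (1 : Fin 16) (φ x + φ y) := by
        have e : (1 + Matrix.single (0 : Fin 16) (1 : Fin 16) (φ x)) *
              (1 + Matrix.single (0 : Fin 16) (1 : Fin 16) (φ y))
            = 1 + (Matrix.single (0 : Fin 16) (1 : Fin 16) (φ x)
              + Matrix.single (0 : Fin 16) (1 : Fin 16) (φ y))
              + Matrix.single (0 : Fin 16) (1 : Fin 16) (φ x)
                * Matrix.single (0 : Fin 16) (1 : Fin 16) (φ y) := by noncomm_ring
        rw [e, hsq', add_zero, Matrix.single_add]
      rw [hL, hstd 0 1 (by decide) x, hstd 0 1 (by decide) y, hR,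
        hstd 0 1 (by decide) (x + y)] at h
      have h2 := congrFun (congrFun h 0) 1
      simpa [Matrix.add_apply, Matrix.one_apply] using h2
    · have h := hm (1 + Matrix.single (0 : Fin 16) (1 : Fin 16) x) (1 + Matrix.single (1 : Fin 16) (2 : Fin 16) y)
        (aux_unit (by decide) x) (aux_unit (by decide) y)
      have hstd3 : ∀ a b c : A,
          (1 + Matrix.single (0 : Fin 16) (1 : Fin 16) a + Matrix.single (1 : Fin 16) (2 : Fin 16) b
            + Matrix.single (0 : Fin 16) (2 : Fin 16) c).map φ
          = 1 + Matrix.single (0 : Fin 16) (1 : Fin 16) (φ a) + Matrix.single (1 : Fin 16) (2 : Fin 16) (φ b)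
            + Matrix.single (0 : Fin 16) (2 : Fin 16) (φ c) := by
        intro a b c
        ext i' j'
        simp only [Matrix.map_apply, Matrix.add_apply, Matrix.one_apply, Matrix.single,
          Matrix.of_apply]
        split_ifs <;> simp_all [h0, h1] <;> omega
      have keyA : (1 + Matrix.single (0 : Fin 16) (1 : Fin 16) x) * (1 + Matrix.single (1 : Fin 16) (2 : Fin 16) y)
          = 1 + Matrix.single (0 : Fin 16) (1 : Fin 16) x + Matrix.single (1 : Fin 16) (2 : Fin 16) y
            + Matrix.single (0 : Fin 16) (2 : Fin 16) (x * y) := by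
        have e : (1 + Matrix.single (0 : Fin 16) (1 : Fin 16) x) *
              (1 + Matrix.single (1 : Fin 16) (2 : Fin 16) y)
            = 1 + Matrix.single (0 : Fin 16) (1 : Fin 16) x
              + Matrix.single (1 : Fin 16) (2 : Fin 16) y
              + Matrix.single (0 : Fin 16) (1 : Fin 16) x
                * Matrix.single (1 : Fin 16) (2 : Fin 16) y := by noncomm_ring
        rw [e, Matrix.single_mul_single_same]
      have keyB : (1 + Matrix.single (0 : Fin 16) (1 : Fin 16) (φ x)) * (1 + Matrix.single (1 : Fin 16) (2 : Fin 16) (φ y))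
          = 1 + Matrix.single (0 : Fin 16) (1 : Fin 16) (φ x) + Matrix.single (1 : Fin 16) (2 : Fin 16) (φ y)
            + Matrix.single (0 : Fin 16) (2 : Fin 16) (φ x * φ y) := by
        have e : (1 + Matrix.single (0 : Fin 16) (1 : Fin 16) (φ x)) *
              (1 + Matrix.single (1 : Fin 16) (2 : Fin 16) (φ y))
            = 1 + Matrix.single (0 : Fin 16) (1 : Fin 16) (φ x)
              + Matrix.single (1 : Fin 16) (2 : Fin 16) (φ y)
              + Matrix.single (0 : Fin 16) (1 : Fin 16) (φ x)
                * Matrix.single (1 : Fin 16) (2 : Fin 16) (φ y) := by noncomm_ring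
        rw [e, Matrix.single_mul_single_same]
      rw [keyA, hstd3 x y (x * y), hstd 0 1 (by decide) x, hstd 1 2 (by decide) y, keyB] at h
      have h2 := congrFun (congrFun h 0) 2
      simpa [Matrix.add_apply, Matrix.one_apply, Matrix.single] using h2
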